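/- arXiv:2301.02300 — 2 statements merged into one kernel-verified Lean document; each statement's English description precedes it below -/
import Mathlib

section
/- (Locality Chen–Fox–Lyndon theorem) Let (X,≤) be a well-ordered set equipped with a locality relation ⊤. Any word w in W_⊤(X) has a unique factorisation w = w_1^{i_1}···w_k^{i_k} where w_1 > ··· > w_k in the lexicographic order are locality Lyndon words and i_1,…,i_k ≥ 1. -/
noncomputable section

/-- The strict lexicographic order on words induced by a strict order on letters.
A shorter word is smaller than any word extending it. -/
def wlt {X : Type*} [LT X] (w v : List X) : Prop := List.Lex (· < ·) w v

/-- A Lyndon word: a nonempty word that is lexicographically (strictly) smaller than all of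
its proper suffixes. -/
def IsLyndon {X : Type*} [LT X] (w : List X) : Prop :=
  w ≠ [] ∧ ∀ u v : List X, u ≠ [] → v ≠ [] → w = u ++ v → wlt w v

/-- A locality word for the locality relation `t`: a word whose letters are pairwise
`t`-related. -/
def LocWord {X : Type*} (t : X → X → Prop) (w : List X) : Prop := w.Pairwise t

/-- Two words are `t`-related if each letter of the first is `t`-related to each letter of
the second. -/
def WordRel {X : Type*} (t : X → X → Prop) (w v : List X) : Prop :=
  ∀ a ∈ w, ∀ b ∈ v, t a b

section CFL

variable {X : Type*} [LinearOrder X]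

theorem wlt_trans : ∀ {a b c : List X}, wlt a b → wlt b c → wlt a c
  | _, _, _, .nil, .rel _ => .nil
  | _, _, _, .nil, .cons _ => .nil
  | _, _, _, .rel h, .rel h' => .rel (h.trans h')
  | _, _, _, .rel h, .cons _ => .rel h
  | _, _, _, .cons _, .rel h => .rel h
  | _, _, _, .cons h, .cons h' => .cons (wlt_trans h h')

theorem wlt_asymm {a b : List X} (h : wlt a b) : ¬ wlt b a :=
  asymm (r := List.Lex ((· < ·) : X → X → Prop)) h

theorem wlt_irrefl {a : List X} (h : wlt a a) : False := wlt_asymm h h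

theorem wlt_trichotomy (a b : List X) : wlt a b ∨ a = b ∨ wlt b a :=
  trichotomous_of (List.Lex ((· < ·) : X → X → Prop)) a b

theorem wlt_append_right {u v : List X} (t : List X) (h : wlt u v) : wlt u (v ++ t) :=
  List.Lex.append_right _ t h

theorem wlt_append_left {u v : List X} (h : wlt u v) (s : List X) :
    wlt (s ++ u) (s ++ v) :=
  List.Lex.append_left _ h s

theorem wlt_prefix (u : List X) {t : List X} (ht : t ≠ []) : wlt u (u ++ t) := by
  induction u with
  | nil =>
    cases t with
    | nil => exact absurd rfl ht
    | cons a t => exact List.Lex.nil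
  | cons a u ih => exact List.Lex.cons ih

theorem wlt_mid {a b : X} (h : a < b) (p u v : List X) :
    wlt (p ++ a :: u) (p ++ b :: v) :=
  List.Lex.append_left _ (List.Lex.rel h) p

theorem lex_cases {u v : List X} (h : wlt u v) :
    (u <+: v ∧ u ≠ v) ∨
      ∃ p a b u' v', a < b ∧ u = p ++ a :: u' ∧ v = p ++ b :: v' := by
  have h' : List.Lex ((· < ·) : X → X → Prop) u v := h
  clear h
  induction h' with
  | nil => exact Or.inl ⟨List.nil_prefix, by simp⟩
  | @rel a l₁ b l₂ hab => exact Or.inr ⟨[], a, b, l₁, l₂, hab, rfl, rfl⟩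
  | @cons a l₁ l₂ h ih =>
    rcases ih with ⟨hp, hne⟩ | ⟨p, x, y, u', v', hxy, rfl, rfl⟩
    · exact Or.inl ⟨List.cons_prefix_cons.2 ⟨rfl, hp⟩, by simpa using hne⟩
    · exact Or.inr ⟨a :: p, x, y, u', v', hxy, rfl, rfl⟩

theorem wlt_stable {u v : List X} (h : wlt u v) (hlen : v.length ≤ u.length)
    (z z' : List X) : wlt (u ++ z) (v ++ z') := by
  rcases lex_cases h with ⟨hp, hne⟩ | ⟨p, a, b, u', v', hab, rfl, rfl⟩
  · exact absurd (hp.eq_of_length (le_antisymm hp.length_le hlen)) hne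
  · have h1 : (p ++ a :: u') ++ z = p ++ a :: (u' ++ z) := by simp
    have h2 : (p ++ b :: v') ++ z' = p ++ b :: (v' ++ z') := by simp
    rw [h1, h2]
    exact wlt_mid hab p _ _

theorem IsLyndon.append {u v : List X} (hu : IsLyndon u) (hv : IsLyndon v)
    (huv : wlt u v) : IsLyndon (u ++ v) := by
  have hkey : wlt (u ++ v) v := by
    rcases lex_cases huv with ⟨⟨t, rfl⟩, hne⟩ | ⟨p, a, b, u', v', hab, rfl, rfl⟩
    · have ht : t ≠ [] := by rintro rfl; simp at hne
      exact wlt_append_left (hv.2 u t hu.1 ht rfl) u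
    · have h1 : (p ++ a :: u') ++ (p ++ b :: v') = p ++ a :: (u' ++ (p ++ b :: v')) := by
        simp
      rw [h1]
      exact wlt_mid hab p _ _
  refine ⟨by simp [hu.1], fun x y hx hy hxy => ?_⟩
  rcases List.append_eq_append_iff.1 hxy.symm with ⟨a', ha1, ha2⟩ | ⟨c', hc1, hc2⟩
  · -- u = x ++ a', y = a' ++ v
    rcases eq_or_ne a' [] with rfl | ha0
    · simp only [List.nil_append] at ha2
      rw [ha2]
      exact hkey
    · have hlt : wlt u a' := hu.2 x a' hx ha0 ha1
      have hlen : a'.length ≤ u.length := by rw [ha1]; simp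
      rw [ha2]
      exact wlt_stable hlt hlen v v
  · -- x = u ++ c', v = c' ++ y
    rcases eq_or_ne c' [] with rfl | hc0
    · simp only [List.nil_append] at hc2
      exact hc2 ▸ hkey
    · have hlt : wlt v y := hv.2 c' y hc0 hy hc2
      exact wlt_trans hkey hlt

theorem R_trans : ∀ a b c : List X,
    (a = b ∨ wlt b a) → (b = c ∨ wlt c b) → (a = c ∨ wlt c a) := by
  rintro a b c (rfl | h1) (rfl | h2)
  · exact Or.inl rfl
  · exact Or.inr h2
  · exact Or.inr h1
  · exact Or.inr (wlt_trans h2 h1)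

theorem not_chain'_decomp {α : Type*} {R : α → α → Prop} :
    ∀ {l : List α}, ¬ l.Chain' R → ∃ l₁ a b l₂, l = l₁ ++ a :: b :: l₂ ∧ ¬ R a b := by
  intro l
  induction l with
  | nil => intro h; exact absurd List.isChain_nil h
  | cons a l ih =>
    intro h
    cases l with
    | nil => exact absurd (List.isChain_singleton a) h
    | cons b l' =>
      simp only [List.Chain', List.isChain_cons_cons] at h
      by_cases hR : R a b
      · have hnc : ¬ (b :: l').Chain' R := fun hc => h ⟨hR, hc⟩
        obtain ⟨l₁, x, y, l₂, heq, hxy⟩ := ih hnc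
        exact ⟨a :: l₁, x, y, l₂, by rw [List.cons_append, ← heq], hxy⟩
      · exact ⟨[], a, b, l', rfl, hR⟩

theorem exists_sorted : ∀ (n : ℕ) (l : List (List X)), l.length ≤ n →
    (∀ u ∈ l, IsLyndon u) →
    ∃ l' : List (List X), (∀ u ∈ l', IsLyndon u) ∧
      l'.Pairwise (fun a b => a = b ∨ wlt b a) ∧ l'.flatten = l.flatten := by
  intro n
  induction n with
  | zero =>
    intro l hl _
    have : l = [] := List.length_eq_zero_iff.1 (Nat.le_zero.1 hl)
    subst this
    exact ⟨[], by simp, List.Pairwise.nil, rfl⟩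
  | succ n ih =>
    intro l hl hlyn
    haveI : IsTrans (List X) (fun a b : List X => a = b ∨ wlt b a) := ⟨R_trans⟩
    by_cases hs : l.Chain' (fun a b : List X => a = b ∨ wlt b a)
    · exact ⟨l, hlyn, List.isChain_iff_pairwise.1 hs, rfl⟩
    · obtain ⟨l₁, a, b, l₂, rfl, hab⟩ := not_chain'_decomp hs
      have hwlt : wlt a b := by
        rcases wlt_trichotomy a b with h | h | h
        · exact h
        · exact absurd (Or.inl h) hab
        · exact absurd (Or.inr h) hab
      have ha : IsLyndon a := hlyn a (by simp)
      have hb : IsLyndon b := hlyn b (by simp)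
      have hmerged : IsLyndon (a ++ b) := ha.append hb hwlt
      obtain ⟨l', h1, h2, h3⟩ := ih (l₁ ++ (a ++ b) :: l₂)
        (by simp at hl ⊢; omega)
        (by
          intro u hu
          rcases List.mem_append.1 hu with h | h
          · exact hlyn u (by simp [h])
          · rcases List.mem_cons.1 h with rfl | h
            · exact hmerged
            · exact hlyn u (by simp [h]))
      exact ⟨l', h1, h2, by rw [h3]; simp⟩

theorem min_suffix (v : List X) : ∀ (l : List (List X)),
    (∀ u ∈ l ++ [v], IsLyndon u) →
    (l ++ [v]).Pairwise (fun a b => a = b ∨ wlt b a) →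
    ∀ s : List X, s ≠ [] → s <:+ (l ++ [v]).flatten → v = s ∨ wlt v s := by
  intro l
  induction l with
  | nil =>
    intro hlyn _ s hs hsuf
    simp only [List.nil_append, List.flatten_cons, List.flatten_nil,
      List.append_nil] at hsuf
    obtain ⟨p, hp⟩ := hsuf
    rcases eq_or_ne p [] with rfl | hp0
    · exact Or.inl hp.symm
    · exact Or.inr ((hlyn v (by simp)).2 p s hp0 hs hp.symm)
  | cons u l ih =>
    intro hlyn hsort s hs hsuf
    have hflat : ((u :: l) ++ [v]).flatten = u ++ (l ++ [v]).flatten := by simp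
    have hvne : v ≠ [] := (hlyn v (by simp)).1
    have hw'ne : (l ++ [v]).flatten ≠ [] := by
      intro h
      rw [List.flatten_eq_nil_iff] at h
      exact hvne (h v (by simp))
    have hlyn' : ∀ x ∈ l ++ [v], IsLyndon x := fun x hx => hlyn x (by simp [hx])
    have hsort' : (l ++ [v]).Pairwise (fun a b => a = b ∨ wlt b a) :=
      (List.pairwise_cons.1 hsort).2
    have hRuv : u = v ∨ wlt v u := (List.pairwise_cons.1 hsort).1 v (by simp)
    obtain ⟨p, hp⟩ := hsuf
    rw [hflat] at hp
    rcases List.append_eq_append_iff.1 hp with ⟨a', ha1, ha2⟩ | ⟨c', _, hc2⟩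
    · -- u = p ++ a', s = a' ++ flatten (l ++ [v])
      rcases eq_or_ne a' [] with rfl | ha0
      · simp only [List.nil_append] at ha2
        rw [ha2]
        exact ih hlyn' hsort' _ hw'ne (List.suffix_refl _)
      · rcases eq_or_ne p [] with rfl | hp0
        · simp only [List.nil_append] at ha1
          rw [ha2, ← ha1]
          right
          rcases hRuv with rfl | hvu
          · exact wlt_prefix u hw'ne
          · exact wlt_append_right _ hvu
        · have hlt : wlt u a' := (hlyn u (by simp)).2 p a' hp0 ha0 ha1
          have hlen : a'.length ≤ u.length := by rw [ha1]; simp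
          have h2 : wlt u (a' ++ (l ++ [v]).flatten) := by
            have := wlt_stable hlt hlen [] (l ++ [v]).flatten
            simpa using this
          right
          rw [ha2]
          rcases hRuv with rfl | hvu
          · exact h2
          · exact wlt_trans hvu h2
    · -- s is a suffix of flatten (l ++ [v])
      exact ih hlyn' hsort' s hs ⟨c', hc2.symm⟩

theorem flatten_eq_nil_of_lyndon {l : List (List X)}
    (hlyn : ∀ u ∈ l, IsLyndon u) (h : l.flatten = []) : l = [] := by
  cases l with
  | nil => rfl
  | cons u l' =>
    exfalso
    rw [List.flatten_cons, List.append_eq_nil_iff] at h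
    exact (hlyn u (by simp)).1 h.1

theorem cfl_unique : ∀ (n : ℕ) (w : List X), w.length ≤ n →
    ∀ l m : List (List X),
    (∀ u ∈ l, IsLyndon u) → l.Pairwise (fun a b => a = b ∨ wlt b a) → l.flatten = w →
    (∀ u ∈ m, IsLyndon u) → m.Pairwise (fun a b => a = b ∨ wlt b a) → m.flatten = w →
    l = m := by
  intro n
  induction n with
  | zero =>
    intro w hw l m hl1 _ hl3 hm1 _ hm3
    have hw0 : w = [] := List.length_eq_zero_iff.1 (Nat.le_zero.1 hw)
    subst hw0
    rw [flatten_eq_nil_of_lyndon hl1 hl3, flatten_eq_nil_of_lyndon hm1 hm3]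
  | succ n ih =>
    intro w hw l m hl1 hl2 hl3 hm1 hm2 hm3
    rcases eq_or_ne w [] with rfl | hwne
    · rw [flatten_eq_nil_of_lyndon hl1 hl3, flatten_eq_nil_of_lyndon hm1 hm3]
    · have hlne : l ≠ [] := by rintro rfl; exact hwne hl3.symm
      have hmne : m ≠ [] := by rintro rfl; exact hwne hm3.symm
      set vl := l.getLast hlne with hvl
      set vm := m.getLast hmne with hvm
      have hldec : l.dropLast ++ [vl] = l := List.dropLast_append_getLast hlne
      have hmdec : m.dropLast ++ [vm] = m := List.dropLast_append_getLast hmne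
      have hvlmem : vl ∈ l := List.getLast_mem hlne
      have hvmmem : vm ∈ m := List.getLast_mem hmne
      have hvlne : vl ≠ [] := (hl1 vl hvlmem).1
      have hvmne : vm ≠ [] := (hm1 vm hvmmem).1
      have hwl : l.dropLast.flatten ++ vl = w := by
        have := congrArg List.flatten hldec
        simp only [List.flatten_append, List.flatten_cons, List.flatten_nil,
          List.append_nil] at this
        rw [this, hl3]
      have hwm : m.dropLast.flatten ++ vm = w := by
        have := congrArg List.flatten hmdec
        simp only [List.flatten_append, List.flatten_cons, List.flatten_nil,
          List.append_nil] at this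
        rw [this, hm3]
      have hminl : ∀ s : List X, s ≠ [] → s <:+ w → vl = s ∨ wlt vl s := by
        intro s hs hsuf
        refine min_suffix vl l.dropLast ?_ ?_ s hs ?_
        · rw [hldec]; exact hl1
        · rw [hldec]; exact hl2
        · rw [hldec, hl3]; exact hsuf
      have hminm : ∀ s : List X, s ≠ [] → s <:+ w → vm = s ∨ wlt vm s := by
        intro s hs hsuf
        refine min_suffix vm m.dropLast ?_ ?_ s hs ?_
        · rw [hmdec]; exact hm1
        · rw [hmdec]; exact hm2
        · rw [hmdec, hm3]; exact hsuf
      have hvlsuf : vl <:+ w := ⟨l.dropLast.flatten, hwl⟩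
      have hvmsuf : vm <:+ w := ⟨m.dropLast.flatten, hwm⟩
      have hveq : vl = vm := by
        rcases hminl vm hvmne hvmsuf with h1 | h1
        · exact h1
        · rcases hminm vl hvlne hvlsuf with h2 | h2
          · exact h2.symm
          · exact absurd h1 (wlt_asymm h2)
      have hflat_eq : l.dropLast.flatten = m.dropLast.flatten := by
        apply List.append_cancel_right (as := l.dropLast.flatten)
          (bs := vl) (cs := m.dropLast.flatten)
        rw [hwl, hveq, hwm]
      have hlen' : l.dropLast.flatten.length ≤ n := by
        have h1 : w.length = l.dropLast.flatten.length + vl.length := by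
          rw [← hwl, List.length_append]
        have h2 : 1 ≤ vl.length := List.length_pos_iff.2 hvlne
        omega
      have hdl : l.dropLast = m.dropLast := by
        refine ih l.dropLast.flatten hlen' l.dropLast m.dropLast ?_ ?_ rfl ?_ ?_ hflat_eq.symm
        · intro u hu; exact hl1 u ((List.dropLast_sublist l).subset hu)
        · exact hl2.sublist (List.dropLast_sublist l)
        · intro u hu; exact hm1 u ((List.dropLast_sublist m).subset hu)
        · exact hm2.sublist (List.dropLast_sublist m)
      rw [← hldec, ← hmdec, hdl, hveq]

theorem singleton_lyndon (x : X) : IsLyndon [x] := by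
  refine ⟨by simp, fun u v hu hv huv => ?_⟩
  exfalso
  have h1 : u.length + v.length = 1 := by
    have := congrArg List.length huv
    simpa using this.symm
  have h2 : 1 ≤ u.length := List.length_pos_iff.2 hu
  have h3 : 1 ≤ v.length := List.length_pos_iff.2 hv
  omega

end CFL

/-- Locality Chen–Fox–Lyndon theorem, Theorem `thm:lynloc` (i).
Let `(X, ≤)` be a well-ordered set with a locality relation `⊤`.  Any locality word
`w ∈ W_⊤(X)` has a unique factorisation `w = w_1^{i_1} ⋯ w_k^{i_k}` with
`w_1 > ⋯ > w_k` locality Lyndon words; equivalently, `w` is in a unique way the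
concatenation of a lexicographically nonincreasing list of locality Lyndon words. -/
theorem statement13 {X : Type*} [LinearOrder X] [WellFoundedLT X]
    (t : X → X → Prop) (hsymm : ∀ a b, t a b → t b a)
    (w : List X) (hw : LocWord t w) :
    ∃! l : List (List X),
      (∀ u ∈ l, IsLyndon u ∧ LocWord t u) ∧
      l.Pairwise (fun a b => a = b ∨ wlt b a) ∧
      l.flatten = w := by
  have hmap' : ∀ v : List X, (v.map fun x => [x]).flatten = v := by
    intro v; induction v with
    | nil => rfl
    | cons a v ihv => simp [ihv]
  have hmap : (w.map fun x => [x]).flatten = w := hmap' w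
  obtain ⟨l, h1, h2, h3⟩ := exists_sorted (w.map fun x => [x]).length
    (w.map fun x => [x]) le_rfl
    (by rintro u hu; obtain ⟨x, _, rfl⟩ := List.mem_map.1 hu; exact singleton_lyndon x)
  rw [hmap] at h3
  refine ⟨l, ⟨fun u hu => ⟨h1 u hu, ?_⟩, h2, h3⟩, ?_⟩
  · exact List.Pairwise.sublist (h3 ▸ List.sublist_flatten_of_mem hu) hw
  · rintro m ⟨hm1, hm2, hm3⟩
    exact cfl_unique w.length w le_rfl m l (fun u hu => (hm1 u hu).1) hm2 hm3 h1 h2 h3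
end
end

section
/- (Locality Radford theorem) Let (X,≤) be a well-ordered set equipped with a locality relation ⊤ and let k be a ℚ-algebra. The set Lyn_⊤(X) of locality Lyndon words on X is a locality algebraically independent generating set of the locality shuffle algebra Sh_⊤(kX); thus Sh_⊤(kX) is a locality polynomial algebra generated by Lyn_⊤(X). -/
noncomputable section

/-- The multiset of shuffles of two words. -/
def shuffles {X : Type*} : List X → List X → Multiset (List X)
  | [], v => {v}
  | a :: w, [] => {a :: w}
  | a :: w, b :: v =>
      ((shuffles w (b :: v)).map (a :: ·)) + ((shuffles (a :: w) v).map (b :: ·))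
  termination_by w v => w.length + v.length

variable (k : Type*) [CommRing k]

/-- The shuffle product on the free module on words. -/
def shMul {X : Type*} (f g : List X →₀ k) : List X →₀ k :=
  f.sum fun w c => g.sum fun v d =>
    ((shuffles w v).map fun u => Finsupp.single u (c * d)).sum

/-- The shuffle-product monomial associated to a list of words. -/
def shProd {X : Type*} (l : List (List X)) : List X →₀ k :=
  l.foldr (fun w acc => shMul k (Finsupp.single w 1) acc) (Finsupp.single [] 1)

set_option linter.unusedSectionVars false

namespace SP

variable {X : Type*} [LinearOrder X]

theorem wlt_iff {u v : List X} : wlt u v ↔ u < v := Iff.rfl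

theorem le_iff_wle {u v : List X} : u ≤ v ↔ wlt u v ∨ u = v := by
  rw [le_iff_lt_or_eq]; exact Iff.rfl

theorem head_le_of_le {a b : X} {u v : List X} (h : (a :: u) ≤ (b :: v)) : a ≤ b := by
  rcases le_iff_wle.1 h with h | h
  · cases h with
    | cons _ => exact le_refl _
    | rel h => exact le_of_lt h
  · cases h; exact le_refl _

theorem cons_lt_cons_iff {a : X} {u v : List X} : (a :: u) < (a :: v) ↔ u < v :=
  by simp [List.cons_lt_cons_iff]

theorem cons_le_cons_iff {a : X} {u v : List X} : (a :: u) ≤ (a :: v) ↔ u ≤ v := by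
  constructor
  · intro h; rcases le_iff_wle.1 h with h | h
    · exact le_of_lt (cons_lt_cons_iff.1 h)
    · cases h; exact le_refl _
  · intro h; rcases le_iff_wle.1 h with h | h
    · exact le_of_lt (cons_lt_cons_iff.2 h)
    · cases h; exact le_refl _

theorem append_lt_append_iff {w u v : List X} : w ++ u < w ++ v ↔ u < v := by
  induction w with
  | nil => exact Iff.rfl
  | cons a w ih => simpa [List.cons_append, cons_lt_cons_iff] using ih

theorem append_le_append_iff {w u v : List X} : w ++ u ≤ w ++ v ↔ u ≤ v := by
  constructor
  · intro h; rcases le_iff_wle.1 h with h | h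
    · exact le_of_lt (append_lt_append_iff.1 h)
    · exact le_of_eq (List.append_cancel_left h)
  · intro h; rcases le_iff_wle.1 h with h | h
    · exact le_of_lt (append_lt_append_iff.2 h)
    · cases h; exact le_refl _

theorem prefix_le {u v : List X} (h : u <+: v) : u ≤ v := by
  obtain ⟨t, rfl⟩ := h
  cases t with
  | nil => simp
  | cons b t =>
    have : ([] : List X) < b :: t := List.Lex.nil
    have := append_lt_append_iff (w := u) (u := []) (v := b :: t) |>.2 this
    simpa using le_of_lt this

theorem lexapp {u v : List X} (h : u < v) (hlen : v.length ≤ u.length) :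
    ∀ A B : List X, u ++ A < v ++ B := by
  induction h with
  | nil => simp at hlen
  | @rel a l₁ b l₂ hab => intro A B; exact List.Lex.rel hab
  | @cons a l₁ l₂ h ih =>
    intro A B
    exact cons_lt_cons_iff.2 (ih (by simpa using hlen) A B)

theorem lt_split {u v : List X} (h : u < v) :
    u <+: v ∨ ∀ A B : List X, u ++ A < v ++ B := by
  induction h with
  | nil => exact Or.inl (List.nil_prefix)
  | @rel a l₁ b l₂ hab => exact Or.inr fun A B => List.Lex.rel hab
  | @cons a l₁ l₂ h ih =>
    rcases ih with h' | h'
    · obtain ⟨t, rfl⟩ := h'; exact Or.inl ⟨t, rfl⟩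
    · exact Or.inr fun A B => cons_lt_cons_iff.2 (h' A B)

theorem smallhead {a : X} {w : List X} (hw : ∀ c ∈ w, a ≤ c) (Z : List X) :
    a :: (w ++ Z) ≤ w ++ a :: Z := by
  induction w with
  | nil => simp
  | cons c w ih =>
    rcases lt_or_eq_of_le (hw c (by simp)) with h | h
    · exact le_of_lt (List.Lex.rel h)
    · cases h
      calc a :: (a :: w ++ Z) ≤ a :: (w ++ a :: Z) :=
            cons_le_cons_iff.2 (ih fun c hc => hw c (by simp [hc]))
        _ = (a :: w) ++ a :: Z := rfl

theorem append_le_self_eq_nil {z A : List X} (h : z ++ A ≤ z) : A = [] := by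
  have h2 : z ≤ z ++ A := prefix_le ⟨A, rfl⟩
  have := le_antisymm h h2
  have := congrArg List.length this
  simp at this
  exact this

/-! ### Lyndon word lemmas -/

theorem lyndon_ne_nil {w : List X} (h : IsLyndon w) : w ≠ [] := h.1

theorem lyndon_singleton (a : X) : IsLyndon [a] := by
  refine ⟨by simp, fun u v hu hv huv => ?_⟩
  exfalso
  have := congrArg List.length huv
  simp [List.length_append] at this
  have hu' := List.length_pos_iff.2 hu
  have hv' := List.length_pos_iff.2 hv
  omega

theorem lyndon_head_le {a : X} {w : List X} (h : IsLyndon (a :: w)) :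
    ∀ c ∈ a :: w, a ≤ c := by
  intro c hc
  rcases List.mem_cons.1 hc with rfl | hc
  · exact le_refl _
  · obtain ⟨s, t, rfl⟩ := List.append_of_mem hc
    have := h.2 (a :: s) (c :: t) (by simp) (by simp) (by simp)
    exact head_le_of_le (le_of_lt this)

theorem append_lt_right {u v : List X} (hv : IsLyndon v) (huv : u < v) (hu : u ≠ []) :
    u ++ v < v := by
  rcases lt_split huv with hpre | hall
  · obtain ⟨z, rfl⟩ := hpre
    have hz : z ≠ [] := by
      rintro rfl; simp at huv
    have : u ++ z < z := hv.2 u z hu hz rfl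
    exact append_lt_append_iff.2 this
  · simpa using hall v []

theorem lyndon_append {u v : List X} (hu : IsLyndon u) (hv : IsLyndon v) (huv : u < v) :
    IsLyndon (u ++ v) := by
  refine ⟨by simp [hu.1], fun p s hp hs hps => ?_⟩
  rcases Nat.lt_trichotomy p.length u.length with hlen | hlen | hlen
  · have hpu : p <+: u :=
      List.prefix_of_prefix_length_le ⟨s, hps.symm⟩ (List.prefix_append u v) (le_of_lt hlen)
    obtain ⟨q, rfl⟩ := hpu
    have hq : q ≠ [] := by rintro rfl; simp at hlen
    have hs' : s = q ++ v := by
      have h2 := hps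
      rw [List.append_assoc] at h2
      exact (List.append_cancel_left h2).symm
    subst hs'
    have huq : (p ++ q) < q := hu.2 p q hp hq rfl
    rcases lt_split huq with hpre | hall
    · exfalso
      have h3 := hpre.length_le
      rw [List.length_append] at h3
      have h4 := List.length_pos_iff.2 hp
      omega
    · exact hall v v
  · have hpu : p = u := by
      have h2 : p <+: u :=
        List.prefix_of_prefix_length_le ⟨s, hps.symm⟩ (List.prefix_append u v) (le_of_eq hlen)
      exact h2.eq_of_length hlen
    subst hpu
    have hs' : s = v := (List.append_cancel_left hps).symm
    subst hs'
    exact append_lt_right hv huv hu.1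
  · have hup : u <+: p :=
      List.prefix_of_prefix_length_le (List.prefix_append u v) ⟨s, hps.symm⟩ (le_of_lt hlen)
    obtain ⟨r, rfl⟩ := hup
    have hr : r ≠ [] := by rintro rfl; simp at hlen
    have hv' : v = r ++ s := by
      have h2 := hps
      rw [List.append_assoc] at h2
      exact List.append_cancel_left h2
    have h1 : u ++ v < v := append_lt_right hv huv hu.1
    have h2 : v < s := hv.2 r s hr hs hv'
    exact lt_trans h1 h2

/-! ### sorted nonincreasing lists of Lyndon words; CFL -/

/-- Nonincreasing. -/
abbrev NI (u v : List X) : Prop := v ≤ u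

theorem push_lemma : ∀ (L : List (List X)) (u : List X), IsLyndon u →
    (∀ x ∈ L, IsLyndon x) → L.Pairwise NI →
    ∃ M : List (List X), (∀ x ∈ M, IsLyndon x) ∧ M.Pairwise NI ∧
      M.flatten = u ++ L.flatten := by
  intro L
  induction L with
  | nil =>
    intro u hu _ _
    exact ⟨[u], by simpa using hu, by simp, by simp⟩
  | cons v L ih =>
    intro u hu hL hs
    rcases le_or_gt v u with hvu | huv
    · refine ⟨u :: v :: L, ?_, ?_, by simp⟩
      · intro x hx
        rcases List.mem_cons.1 hx with rfl | hx
        · exact hu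
        · exact hL x hx
      · refine List.pairwise_cons.2 ⟨?_, hs⟩
        intro b hb
        rcases List.mem_cons.1 hb with rfl | hb
        · exact hvu
        · exact le_trans ((List.pairwise_cons.1 hs).1 b hb) hvu
    · have huv' : IsLyndon (u ++ v) := lyndon_append hu (hL v (by simp)) huv
      obtain ⟨M, hM1, hM2, hM3⟩ := ih (u ++ v) huv' (fun x hx => hL x (by simp [hx]))
        ((List.pairwise_cons.1 hs).2)
      exact ⟨M, hM1, hM2, by simp [hM3]⟩

theorem cfl_exists (w : List X) :
    ∃ L : List (List X), (∀ x ∈ L, IsLyndon x) ∧ L.Pairwise NI ∧ L.flatten = w := by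
  induction w with
  | nil => exact ⟨[], by simp, by simp, by simp⟩
  | cons a w ih =>
    obtain ⟨L, h1, h2, h3⟩ := ih
    obtain ⟨M, hM1, hM2, hM3⟩ := push_lemma L [a] (lyndon_singleton a) h1 h2
    exact ⟨M, hM1, hM2, by simp [hM3, h3]⟩

theorem getLast_suffix_flatten : ∀ (L : List (List X)) (h : L ≠ []),
    L.getLast h <:+ L.flatten := by
  intro L
  induction L with
  | nil => intro h; exact absurd rfl h
  | cons u L ih =>
    intro h
    cases L with
    | nil => simp
    | cons v L =>
      have h1 : (v :: L).getLast (by simp) <:+ (v :: L).flatten := ih (by simp)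
      rw [List.getLast_cons (by simp : (v:: L) ≠ [])]
      exact h1.trans ⟨u, by simp⟩

theorem min_suffix {L : List (List X)} (hlyn : ∀ x ∈ L, IsLyndon x) (hs : L.Pairwise NI)
    (hne : L ≠ []) :
    ∀ s : List X, s ≠ [] → s <:+ L.flatten → L.getLast hne ≤ s := by
  induction L with
  | nil => exact absurd rfl hne
  | cons u L ih =>
    intro s hsne hsuf
    have hu : IsLyndon u := hlyn u (by simp)
    cases L with
    | nil =>
      simp only [List.flatten_cons, List.flatten_nil, List.append_nil] at hsuf
      simp only [List.getLast_singleton]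
      obtain ⟨p, rfl⟩ := hsuf
      rcases eq_or_ne p [] with rfl | hp
      · simp
      · exact le_of_lt (hu.2 p s hp hsne rfl)
    | cons v L =>
      have hLne : (v :: L) ≠ [] := by simp
      rw [List.getLast_cons hLne]
      simp only [List.flatten_cons] at hsuf
      rcases le_or_gt s.length (v :: L).flatten.length with hlen | hlen
      · have hsuf' : s <:+ (v :: L).flatten :=
          List.suffix_of_suffix_length_le hsuf ⟨u, rfl⟩ hlen
        exact ih (fun x hx => hlyn x (by simp [hx])) (List.pairwise_cons.1 hs).2 hLne s hsne hsuf'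
      · have hflsuf : (v :: L).flatten <:+ s :=
          List.suffix_of_suffix_length_le ⟨u, rfl⟩ hsuf (le_of_lt hlen)
        obtain ⟨t, ht⟩ := hflsuf
        have htne : t ≠ [] := by
          intro h0
          have hlen2 : (v :: L).flatten.length = s.length := by rw [← ht, h0]; simp
          omega
        have htu : t <:+ u := by
          obtain ⟨p, hp⟩ := hsuf
          rw [← ht, ← List.append_assoc] at hp
          exact ⟨p, List.append_cancel_right hp⟩
        have hgu : (v :: L).getLast hLne ≤ u :=
          (List.pairwise_cons.1 hs).1 _ (List.getLast_mem hLne)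
        have hut : u ≤ t := by
          obtain ⟨q, hq⟩ := htu
          rcases eq_or_ne q [] with rfl | hqne
          · simp at hq; exact le_of_eq hq.symm
          · exact le_of_lt (hu.2 q t hqne htne hq.symm)
        have hts : t ≤ s := prefix_le ⟨(v :: L).flatten, ht⟩
        exact le_trans (le_trans hgu hut) hts

theorem cfl_unique_aux : ∀ (n : ℕ) (L M : List (List X)), L.length ≤ n →
    (∀ x ∈ L, IsLyndon x) → L.Pairwise NI → (∀ x ∈ M, IsLyndon x) → M.Pairwise NI →
    L.flatten = M.flatten → L = M := by
  intro n
  induction n with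
  | zero =>
    intro L M hlen hL _ hM _ hfl
    have hL0 : L = [] := List.length_eq_zero_iff.1 (Nat.le_zero.1 hlen)
    subst hL0
    rcases eq_or_ne M [] with rfl | hMne
    · rfl
    · exfalso
      have h0 : M.flatten = [] := by simpa using hfl.symm
      obtain ⟨m, hm⟩ := List.exists_mem_of_ne_nil M hMne
      exact (hM m hm).1 (List.flatten_eq_nil_iff.1 h0 m hm)
  | succ n ihn =>
    intro L M hlen hL hsL hM hsM hfl
    rcases eq_or_ne L [] with rfl | hLne
    · exact (ihn [] M (by simp) (by simp) (by simp) hM hsM hfl)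
    · rcases eq_or_ne M [] with rfl | hMne
      · exfalso
        have h0 : L.flatten = [] := by simpa using hfl
        obtain ⟨m, hm⟩ := List.exists_mem_of_ne_nil L hLne
        exact (hL m hm).1 (List.flatten_eq_nil_iff.1 h0 m hm)
      · have huv : L.getLast hLne = M.getLast hMne := by
          refine le_antisymm ?_ ?_
          · refine min_suffix hL hsL hLne _ (hM _ (List.getLast_mem hMne)).1 ?_
            rw [hfl]; exact getLast_suffix_flatten M hMne
          · refine min_suffix hM hsM hMne _ (hL _ (List.getLast_mem hLne)).1 ?_
            rw [← hfl]; exact getLast_suffix_flatten L hLne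
        obtain ⟨L', u, rfl⟩ : ∃ L' u, L = L' ++ [u] :=
          ⟨L.dropLast, L.getLast hLne, (List.dropLast_append_getLast hLne).symm⟩
        obtain ⟨M', v, rfl⟩ : ∃ M' v, M = M' ++ [v] :=
          ⟨M.dropLast, M.getLast hMne, (List.dropLast_append_getLast hMne).symm⟩
        simp only [List.getLast_append] at huv
        simp at huv
        subst huv
        have hfl' : L'.flatten = M'.flatten := by
          rw [List.flatten_append, List.flatten_append] at hfl
          simp only [List.flatten_cons, List.flatten_nil, List.append_nil] at hfl
          exact List.append_cancel_right hfl
        have hrec : L' = M' := by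
          refine ihn L' M' ?_ (fun x hx => hL x (by simp [hx])) ?_
            (fun x hx => hM x (by simp [hx])) ?_ hfl'
          · have := hlen; rw [List.length_append] at this; simp at this; omega
          · exact (List.pairwise_append.1 hsL).1
          · exact (List.pairwise_append.1 hsM).1
        rw [hrec]

theorem cfl_unique {L M : List (List X)}
    (hL : ∀ x ∈ L, IsLyndon x) (hsL : L.Pairwise NI) (hM : ∀ x ∈ M, IsLyndon x)
    (hsM : M.Pairwise NI) (hfl : L.flatten = M.flatten) : L = M :=
  cfl_unique_aux L.length L M (le_refl _) hL hsL hM hsM hfl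

/-! ### shuffle lemmas -/

@[simp] theorem shuffles_nil_left (v : List X) : shuffles [] v = {v} := by
  rw [shuffles]

@[simp] theorem shuffles_nil_right (u : List X) : shuffles u [] = {u} := by
  cases u <;> rw [shuffles]

theorem shuffles_cons_cons (a b : X) (u v : List X) :
    shuffles (a :: u) (b :: v) =
      ((shuffles u (b :: v)).map (a :: ·)) + ((shuffles (a :: u) v).map (b :: ·)) := by
  rw [shuffles]

theorem mem_shuffles_cons_cons {a b : X} {u v s : List X} :
    s ∈ shuffles (a :: u) (b :: v) ↔
      (∃ s', s' ∈ shuffles u (b :: v) ∧ s = a :: s') ∨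
      (∃ s', s' ∈ shuffles (a :: u) v ∧ s = b :: s') := by
  rw [shuffles_cons_cons]
  simp only [Multiset.mem_add, Multiset.mem_map]
  constructor
  · rintro (⟨s', h1, h2⟩ | ⟨s', h1, h2⟩)
    · exact Or.inl ⟨s', h1, h2.symm⟩
    · exact Or.inr ⟨s', h1, h2.symm⟩
  · rintro (⟨s', h1, h2⟩ | ⟨s', h1, h2⟩)
    · exact Or.inl ⟨s', h1, h2.symm⟩
    · exact Or.inr ⟨s', h1, h2.symm⟩

theorem cons_left_mem_shuffles {a : X} {u y s' : List X} (h : s' ∈ shuffles u y) :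
    a :: s' ∈ shuffles (a :: u) y := by
  cases y with
  | nil => simp at h; simp [h]
  | cons b y =>
    rw [mem_shuffles_cons_cons]
    exact Or.inl ⟨s', h, rfl⟩

theorem cons_right_mem_shuffles {b : X} {u y s' : List X} (h : s' ∈ shuffles u y) :
    b :: s' ∈ shuffles u (b :: y) := by
  cases u with
  | nil => simp at h; simp [h]
  | cons a u =>
    rw [mem_shuffles_cons_cons]
    exact Or.inr ⟨s', h, rfl⟩

theorem append_mem_shuffles : ∀ (u v : List X), u ++ v ∈ shuffles u v
  | [], v => by simp
  | a :: u, [] => by simp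
  | a :: u, b :: v => by
    exact cons_left_mem_shuffles (append_mem_shuffles u (b :: v))
  termination_by u v => u.length + v.length

theorem mem_shuffles_perm_aux : ∀ (n : ℕ) (u v s : List X), u.length + v.length ≤ n →
    s ∈ shuffles u v → List.Perm s (u ++ v) := by
  intro n
  induction n with
  | zero =>
    intro u v s hlen hs
    have hu : u = [] := by cases u <;> simp_all
    have hv : v = [] := by cases v <;> simp_all
    subst hu; subst hv
    simp at hs; simp [hs]
  | succ n ih =>
    intro u v s hlen hs
    match u, v with
    | [], v =>
      rw [shuffles_nil_left, Multiset.mem_singleton] at hs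
      subst hs; simp
    | a :: u, [] =>
      rw [shuffles_nil_right, Multiset.mem_singleton] at hs
      subst hs; simp
    | a :: u, b :: v =>
      rcases mem_shuffles_cons_cons.1 hs with ⟨s', h1, rfl⟩ | ⟨s', h1, rfl⟩
      · exact (ih u (b :: v) s' (by simp at hlen ⊢; omega) h1).cons a
      · refine List.Perm.trans ((ih (a :: u) v s' (by simp at hlen ⊢; omega) h1).cons b) ?_
        exact List.perm_middle.symm

theorem mem_shuffles_perm {u v s : List X} (h : s ∈ shuffles u v) : List.Perm s (u ++ v) :=
  mem_shuffles_perm_aux (u.length + v.length) u v s (le_refl _) h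

theorem mem_shuffles_length {u v s : List X} (h : s ∈ shuffles u v) :
    s.length = u.length + v.length := by
  have := (mem_shuffles_perm h).length_eq
  simpa using this

theorem mem_shuffles_ne_nil {u v s : List X} (h : s ∈ shuffles u v) (hu : u ≠ []) : s ≠ [] := by
  intro h0
  have hlen := mem_shuffles_length h
  rw [h0] at hlen
  simp only [List.length_nil] at hlen
  have : u.length = 0 := by omega
  exact hu (List.length_eq_zero_iff.1 this)

theorem assoc_aux : ∀ (n : ℕ) (u v w z s : List X), u.length + v.length + w.length ≤ n →
    ((z ∈ shuffles u v → s ∈ shuffles z w → ∃ y, y ∈ shuffles v w ∧ s ∈ shuffles u y) ∧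
     (z ∈ shuffles v w → s ∈ shuffles u z → ∃ y, y ∈ shuffles u v ∧ s ∈ shuffles y w)) := by
  intro n
  induction n with
  | zero =>
    intro u v w z s hlen
    have hu : u = [] := by cases u <;> simp_all
    have hv : v = [] := by cases v <;> simp_all <;> omega
    have hw : w = [] := by cases w <;> simp_all
    subst hu; subst hv; subst hw
    constructor
    · intro h1 h2; simp at h1 h2; subst h1; subst h2; exact ⟨[], by simp⟩
    · intro h1 h2; simp at h1 h2; subst h1; subst h2; exact ⟨[], by simp⟩
  | succ n ih =>
    intro u v w z s hlen
    constructor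
    · intro h1 h2
      match u, v, w with
      | [], v, w =>
        simp at h1; subst h1
        exact ⟨s, h2, by simp⟩
      | a :: u, [], w =>
        simp at h1; subst h1
        exact ⟨w, by simp, h2⟩
      | a :: u, b :: v, [] =>
        simp at h2; subst h2
        exact ⟨b :: v, by simp, h1⟩
      | a :: u, b :: v, c :: w =>
        rcases mem_shuffles_cons_cons.1 h1 with ⟨z', hz1, rfl⟩ | ⟨z', hz1, rfl⟩
        · rcases mem_shuffles_cons_cons.1 h2 with ⟨s', hs1, rfl⟩ | ⟨s', hs1, rfl⟩
          · obtain ⟨y, hy1, hy2⟩ := (ih u (b :: v) (c :: w) z' s' (by simp at hlen ⊢; omega)).1 hz1 hs1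
            exact ⟨y, hy1, cons_left_mem_shuffles hy2⟩
          · obtain ⟨y, hy1, hy2⟩ := (ih (a :: u) (b :: v) w (a :: z') s' (by simp at hlen ⊢; omega)).1 h1 hs1
            exact ⟨c :: y, cons_right_mem_shuffles hy1, cons_right_mem_shuffles hy2⟩
        · rcases mem_shuffles_cons_cons.1 h2 with ⟨s', hs1, rfl⟩ | ⟨s', hs1, rfl⟩
          · obtain ⟨y, hy1, hy2⟩ := (ih (a :: u) v (c :: w) z' s' (by simp at hlen ⊢; omega)).1 hz1 hs1
            exact ⟨b :: y, cons_left_mem_shuffles hy1, cons_right_mem_shuffles hy2⟩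
          · obtain ⟨y, hy1, hy2⟩ := (ih (a :: u) (b :: v) w (b :: z') s' (by simp at hlen ⊢; omega)).1 h1 hs1
            exact ⟨c :: y, cons_right_mem_shuffles hy1, cons_right_mem_shuffles hy2⟩
    · intro h1 h2
      match u, v, w with
      | [], v, w =>
        simp at h2; subst h2
        exact ⟨v, by simp, h1⟩
      | a :: u, [], w =>
        simp at h1; subst h1
        exact ⟨a :: u, by simp, h2⟩
      | a :: u, b :: v, [] =>
        simp at h1; subst h1
        exact ⟨s, h2, by simp⟩
      | a :: u, b :: v, c :: w =>
        obtain ⟨d, z', rfl⟩ : ∃ d z', z = d :: z' := by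
          rcases z with _ | ⟨d, z'⟩
          · exact absurd rfl (mem_shuffles_ne_nil h1 (by simp))
          · exact ⟨d, z', rfl⟩
        rcases mem_shuffles_cons_cons.1 h2 with ⟨s', hs1, rfl⟩ | ⟨s', hs1, rfl⟩
        · obtain ⟨y, hy1, hy2⟩ := (ih u (b :: v) (c :: w) (d :: z') s' (by simp at hlen ⊢; omega)).2 h1 hs1
          exact ⟨a :: y, cons_left_mem_shuffles hy1, cons_left_mem_shuffles hy2⟩
        · rcases mem_shuffles_cons_cons.1 h1 with ⟨z'', hz1, hzz⟩ | ⟨z'', hz1, hzz⟩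
          · injection hzz with hd hz'
            subst hd
            rw [← hz'] at hz1
            obtain ⟨y, hy1, hy2⟩ := (ih (a :: u) v (c :: w) z' s' (by simp at hlen ⊢; omega)).2 hz1 hs1
            exact ⟨d :: y, cons_right_mem_shuffles hy1, cons_left_mem_shuffles hy2⟩
          · injection hzz with hd hz'
            subst hd
            rw [← hz'] at hz1
            obtain ⟨y, hy1, hy2⟩ := (ih (a :: u) (b :: v) w z' s' (by simp at hlen ⊢; omega)).2 hz1 hs1
            exact ⟨y, hy1, cons_right_mem_shuffles hy2⟩

theorem assoc1 {u v w z s : List X} (h1 : z ∈ shuffles u v) (h2 : s ∈ shuffles z w) :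
    ∃ y, y ∈ shuffles v w ∧ s ∈ shuffles u y :=
  (assoc_aux (u.length + v.length + w.length) u v w z s (le_refl _)).1 h1 h2

theorem assoc2 {u v w z s : List X} (h1 : z ∈ shuffles v w) (h2 : s ∈ shuffles u z) :
    ∃ y, y ∈ shuffles u v ∧ s ∈ shuffles y w :=
  (assoc_aux (u.length + v.length + w.length) u v w z s (le_refl _)).2 h1 h2

theorem shuffles_comm_aux : ∀ (n : ℕ) (u v : List X), u.length + v.length ≤ n →
    shuffles u v = shuffles v u := by
  intro n
  induction n with
  | zero =>
    intro u v hlen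
    have hu : u = [] := by cases u <;> simp_all
    have hv : v = [] := by cases v <;> simp_all
    subst hu; subst hv; rfl
  | succ n ih =>
    intro u v hlen
    match u, v with
    | [], v => cases v <;> simp
    | a :: u, [] => simp
    | a :: u, b :: v =>
      rw [shuffles_cons_cons, shuffles_cons_cons]
      rw [ih u (b :: v) (by simp at hlen ⊢; omega), ih (a :: u) v (by simp at hlen ⊢; omega)]
      exact add_comm _ _

theorem shuffles_comm (u v : List X) : shuffles u v = shuffles v u :=
  shuffles_comm_aux (u.length + v.length) u v (le_refl _)

/-! ### iterated shuffles of a list of words -/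

def shL (L : List (List X)) : Multiset (List X) :=
  L.foldr (fun w acc => acc.bind (shuffles w)) {[]}

@[simp] theorem shL_nil : shL ([] : List (List X)) = {[]} := rfl

@[simp] theorem shL_cons (w : List X) (L : List (List X)) :
    shL (w :: L) = (shL L).bind (shuffles w) := rfl

theorem mem_shL_cons {w : List X} {L : List (List X)} {s : List X} :
    s ∈ shL (w :: L) ↔ ∃ m ∈ shL L, s ∈ shuffles w m := by
  simp [Multiset.mem_bind]

theorem flatten_mem_shL (L : List (List X)) : L.flatten ∈ shL L := by
  induction L with
  | nil => simp
  | cons w L ih =>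
    rw [List.flatten_cons, shL_cons, Multiset.mem_bind]
    exact ⟨L.flatten, ih, append_mem_shuffles _ _⟩

theorem mem_shL_perm {L : List (List X)} {s : List X} (h : s ∈ shL L) :
    List.Perm s L.flatten := by
  induction L generalizing s with
  | nil => simp at h; simp [h]
  | cons w L ih =>
    rw [mem_shL_cons] at h
    obtain ⟨m, hm, hs⟩ := h
    refine List.Perm.trans (mem_shuffles_perm hs) ?_
    rw [List.flatten_cons]
    exact (ih hm).append_left w

theorem mem_shL_length {L : List (List X)} {s : List X} (h : s ∈ shL L) :
    s.length = L.flatten.length := (mem_shL_perm h).length_eq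

theorem nest_shL : ∀ (F : List (List X)) (K : List (List X)) (m k s : List X),
    m ∈ shL F → k ∈ shL K → s ∈ shuffles m k → s ∈ shL (F ++ K) := by
  intro F
  induction F with
  | nil =>
    intro K m k s hm hk hs
    simp at hm; subst hm
    simp at hs; subst hs
    simpa using hk
  | cons f F ih =>
    intro K m k s hm hk hs
    rw [mem_shL_cons] at hm
    obtain ⟨m₂, hm₂, hmf⟩ := hm
    obtain ⟨y, hy1, hy2⟩ := assoc1 hmf hs
    have := ih K m₂ k y hm₂ hk hy1
    rw [List.cons_append, mem_shL_cons]
    exact ⟨y, this, hy2⟩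

theorem shL_perm_mem : ∀ {L L' : List (List X)}, List.Perm L L' →
    ∀ {s : List X}, s ∈ shL L → s ∈ shL L' := by
  intro L L' hp
  induction hp with
  | nil => exact fun h => h
  | cons x _ ih =>
    intro s hs
    rw [mem_shL_cons] at hs ⊢
    obtain ⟨m, hm, hs⟩ := hs
    exact ⟨m, ih hm, hs⟩
  | swap x y T =>
    intro s hs
    rw [mem_shL_cons] at hs ⊢
    obtain ⟨m, hm, hs⟩ := hs
    rw [mem_shL_cons] at hm
    obtain ⟨tt, htt, hm⟩ := hm
    obtain ⟨w, hw1, hw2⟩ := assoc2 hm hs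
    rw [shuffles_comm] at hw1
    obtain ⟨y', hy1, hy2⟩ := assoc1 hw1 hw2
    refine ⟨y', ?_, hy2⟩
    rw [mem_shL_cons]
    exact ⟨tt, htt, hy1⟩
  | trans _ _ ih1 ih2 => exact fun h => ih2 (ih1 h)

theorem shL_nil_mem {L : List (List X)} {s : List X} (h : s ∈ shL ([] :: L)) : s ∈ shL L := by
  rw [mem_shL_cons] at h
  obtain ⟨m, hm, hs⟩ := h
  simp at hs
  subst hs
  exact hm

theorem peel_shL : ∀ (L : List (List X)), (∀ x ∈ L, x ≠ []) → L ≠ [] →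
    ∀ {s : List X}, s ∈ shL L →
    ∃ (i : ℕ) (hi : i < L.length) (aa : X) (w' s' : List X),
      L.get ⟨i, hi⟩ = aa :: w' ∧ s = aa :: s' ∧ s' ∈ shL (L.set i w') := by
  intro L
  induction L with
  | nil => intro _ h; exact absurd rfl h
  | cons w L ih =>
    intro hne _ s hs
    rw [mem_shL_cons] at hs
    obtain ⟨m, hm, hsm⟩ := hs
    obtain ⟨a, w', rfl⟩ : ∃ a w', w = a :: w' := by
      rcases w with _ | ⟨a, w'⟩
      · exact absurd rfl (hne [] (by simp))
      · exact ⟨a, w', rfl⟩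
    rcases eq_or_ne L [] with rfl | hLne
    · simp at hm
      subst hm
      simp at hsm
      subst hsm
      refine ⟨0, by simp, a, w', w', rfl, rfl, ?_⟩
      show w' ∈ shL [w']
      rw [mem_shL_cons]
      exact ⟨[], by simp, by simp⟩
    · rcases eq_or_ne m [] with rfl | hmne
      · exfalso
        obtain ⟨x, hx⟩ := List.exists_mem_of_ne_nil L hLne
        have h0 : L.flatten = [] := by
          have hl := (mem_shL_perm hm).length_eq
          simp only [List.length_nil] at hl
          exact (List.length_eq_zero_iff.1 hl.symm)
        exact hne x (by simp [hx]) (List.flatten_eq_nil_iff.1 h0 x hx)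
      · obtain ⟨b, m', rfl⟩ : ∃ b m', m = b :: m' := by
          rcases m with _ | ⟨b, m'⟩
          · exact absurd rfl hmne
          · exact ⟨b, m', rfl⟩
        rcases mem_shuffles_cons_cons.1 hsm with ⟨s', hs1, rfl⟩ | ⟨s', hs1, rfl⟩
        · refine ⟨0, by simp, a, w', s', rfl, rfl, ?_⟩
          show s' ∈ shL (w' :: L)
          rw [mem_shL_cons]
          exact ⟨b :: m', hm, hs1⟩
        · obtain ⟨i, hi, aa, ww', s'', hget, heq, hmem⟩ :=
            ih (fun x hx => hne x (by simp [hx])) hLne hm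
          rw [List.cons.injEq] at heq
          obtain ⟨rfl, rfl⟩ := heq
          refine ⟨i + 1, by simpa using hi, b, ww', s', ?_, rfl, ?_⟩
          · simpa using hget
          · rw [List.set_cons_succ, mem_shL_cons]
            exact ⟨m', hmem, hs1⟩

/-! ### sorting lists of words -/

instance : DecidableRel (NI (X := X)) := fun u v => inferInstanceAs (Decidable (v ≤ u))
instance : IsTrans (List X) NI := ⟨fun _ _ _ h1 h2 => le_trans h2 h1⟩
instance : IsAntisymm (List X) NI := ⟨fun _ _ h1 h2 => le_antisymm h2 h1⟩
instance : IsTotal (List X) NI := ⟨fun a b => (le_total b a).imp id id⟩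

def sortL (K : List (List X)) : List (List X) := Multiset.sort (↑K) NI

theorem sortL_sorted (K : List (List X)) : (sortL K).Pairwise NI :=
  Multiset.pairwise_sort _ _

theorem sortL_perm (K : List (List X)) : List.Perm (sortL K) K :=
  Multiset.coe_eq_coe.1 (Multiset.sort_eq _ _)

theorem mem_sortL {K : List (List X)} {x : List X} : x ∈ sortL K ↔ x ∈ K :=
  (sortL_perm K).mem_iff

theorem sortL_congr {K K' : List (List X)} (h : List.Perm K K') : sortL K = sortL K' := by
  unfold sortL
  rw [Multiset.coe_eq_coe.2 h]

theorem sortL_eq_of_sorted {K N : List (List X)} (hs : N.Pairwise NI) (hp : List.Perm N K) :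
    sortL K = N :=
  List.Perm.eq_of_pairwise' (sortL_sorted K) hs ((sortL_perm K).trans hp.symm)

theorem sorted_getLast_le {F : List (List X)} (hs : F.Pairwise NI) (h : F ≠ []) :
    ∀ f ∈ F, F.getLast h ≤ f := by
  induction F with
  | nil => exact absurd rfl h
  | cons u F ih =>
    intro f hf
    rcases eq_or_ne F [] with rfl | hFne
    · simp at hf
      subst hf
      simp
    · rw [List.getLast_cons hFne]
      rcases List.mem_cons.1 hf with rfl | hf
      · exact (List.pairwise_cons.1 hs).1 _ (List.getLast_mem hFne)
      · exact ih (List.pairwise_cons.1 hs).2 hFne f hf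

theorem sorted_get_le_zero {L : List (List X)} (hs : L.Pairwise NI) {i : ℕ} (hi : i < L.length)
    (h0 : 0 < L.length) : L.get ⟨i, hi⟩ ≤ L.get ⟨0, h0⟩ := by
  rcases Nat.eq_zero_or_pos i with rfl | hpos
  · exact le_refl _
  · exact hs.rel_get_of_lt (by exact hpos)

theorem perm_get_eraseIdx : ∀ (L : List (List X)) (i : ℕ) (hi : i < L.length),
    List.Perm L (L.get ⟨i, hi⟩ :: L.eraseIdx i) := by
  intro L
  induction L with
  | nil => intro i hi; simp at hi
  | cons x T ih =>
    intro i hi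
    cases i with
    | zero => simp
    | succ i =>
      have hi' : i < T.length := by simpa using hi
      have := (ih i hi').cons x
      refine this.trans ?_
      exact List.Perm.swap _ _ _

theorem perm_set_eraseIdx : ∀ (L : List (List X)) (i : ℕ), i < L.length → ∀ (x : List X),
    List.Perm (L.set i x) (x :: L.eraseIdx i) := by
  intro L
  induction L with
  | nil => intro i hi; simp at hi
  | cons y T ih =>
    intro i hi x
    cases i with
    | zero => simp
    | succ i =>
      have hi' : i < T.length := by simpa using hi
      rw [List.set_cons_succ, List.eraseIdx_cons_succ]
      exact ((ih i hi' x).cons y).trans (List.Perm.swap _ _ _)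

theorem splitF {l1 : List X} : ∀ (F : List (List X)), F.Pairwise NI →
    ∃ Fp Fm : List (List X), F = Fp ++ Fm ∧ (∀ f ∈ Fp, l1 < f) ∧ (∀ f ∈ Fm, f ≤ l1) := by
  intro F
  induction F with
  | nil => exact fun _ => ⟨[], [], by simp, by simp, by simp⟩
  | cons f F ih =>
    intro hs
    rcases lt_or_ge l1 f with hlt | hle
    · obtain ⟨Fp, Fm, h1, h2, h3⟩ := ih (List.pairwise_cons.1 hs).2
      refine ⟨f :: Fp, Fm, by simp [h1], ?_, h3⟩
      intro g hg
      rcases List.mem_cons.1 hg with rfl | hg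
      · exact hlt
      · exact h2 g hg
    · refine ⟨[], f :: F, by simp, by simp, ?_⟩
      intro g hg
      rcases List.mem_cons.1 hg with rfl | hg
      · exact hle
      · exact le_trans ((List.pairwise_cons.1 hs).1 g hg) hle

theorem le_nil_eq {W : List X} (h : W ≤ []) : W = [] := by
  have := le_antisymm h (prefix_le List.nil_prefix)
  simpa using this.symm

/-! ### the key word inequality -/

theorem loop_lemma (l1 Q R2 W : List X) (hl1 : IsLyndon l1) :
    ∀ (n : ℕ) (z : List X) (G : List (List X)), z.length ≤ n →
    (∀ f ∈ G, f ≠ []) →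
    z <:+ l1.tail →
    G.flatten ++ W ≤ z →
    (G.flatten = z → W = [] → l1 ++ Q ≤ R2) →
    G.flatten ++ (l1 ++ Q) ≤ z ++ R2 := by
  intro n
  induction n with
  | zero =>
    intro z G hlen hGne hzsuf hinv heq
    have hz : z = [] := List.length_eq_zero_iff.1 (Nat.le_zero.1 hlen)
    subst hz
    have hGW : G.flatten ++ W = [] := le_nil_eq hinv
    rcases List.append_eq_nil_iff.1 hGW with ⟨hG, hW⟩
    have := heq hG hW
    simpa [hG] using this
  | succ n ih =>
    intro z G hlen hGne hzsuf hinv heq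
    cases G with
    | nil =>
      rcases eq_or_ne z [] with rfl | hzne
      · have hW : W = [] := le_nil_eq (by simpa using hinv)
        simpa using heq rfl hW
      · -- z is a nonempty proper suffix of l1, so l1 < z and z is shorter
        obtain ⟨a0, t0, rfl⟩ : ∃ a0 t0, l1 = a0 :: t0 := by
          rcases l1 with _ | ⟨a0, t0⟩
          · exact absurd rfl hl1.1
          · exact ⟨a0, t0, rfl⟩
        obtain ⟨p, hp⟩ := hzsuf
        rw [List.tail_cons] at hp
        have hlt : (a0 :: t0) < z :=
          hl1.2 (a0 :: p) z (by simp) hzne (by rw [List.cons_append, hp])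
        have hlenz : z.length ≤ t0.length := by
          have := congrArg List.length hp
          simp at this
          omega
        have hfin := lexapp hlt (by simp; omega) Q R2
        simpa using le_of_lt hfin
    | cons f G' =>
      have hfne : f ≠ [] := hGne f (by simp)
      have hpre : f ≤ f ++ (G'.flatten ++ W) := prefix_le ⟨G'.flatten ++ W, rfl⟩
      have hinv' : f ++ (G'.flatten ++ W) ≤ z := by
        simpa [List.flatten_cons, List.append_assoc] using hinv
      have hfz : f ≤ z := le_trans hpre hinv'
      rcases eq_or_lt_of_le hfz with rfl | hflt
      · -- f = z
        have hnil : G'.flatten ++ W = [] := append_le_self_eq_nil hinv'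
        rcases List.append_eq_nil_iff.1 hnil with ⟨hG', hW⟩
        have hQR := heq (by simp [List.flatten_cons, hG']) hW
        have : f ++ (l1 ++ Q) ≤ f ++ R2 := append_le_append_iff.2 hQR
        simpa [List.flatten_cons, hG', List.append_assoc] using this
      · rcases lt_split hflt with hfpre | hall
        · obtain ⟨z1, rfl⟩ := hfpre
          have hz1ne : z1 ≠ [] := by
            rintro rfl
            simp at hflt
          have hlen1 : z1.length ≤ n := by
            have hfpos : 0 < f.length := List.length_pos_iff.2 hfne
            have := hlen
            rw [List.length_append] at this
            omega
          have hrec := ih z1 G' hlen1 (fun g hg => hGne g (by simp [hg]))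
            (((List.suffix_append f z1) : z1 <:+ f ++ z1).trans hzsuf)
            (append_le_append_iff.1 (by simpa [List.flatten_cons, List.append_assoc] using hinv))
            (fun h1 h2 => heq (by simp [List.flatten_cons, h1]) h2)
          have := (append_le_append_iff (w := f)).2 hrec
          simpa [List.flatten_cons, List.append_assoc] using this
        · have := hall (G'.flatten ++ (l1 ++ Q)) R2
          refine le_of_lt ?_
          simpa [List.flatten_cons, List.append_assoc] using this

theorem word_ineq : ∀ (i : ℕ) (L F : List (List X)) (a : X) (w' : List X)
    (hi : i < L.length),
    (∀ x ∈ L, IsLyndon x) → L.Pairwise NI →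
    (∀ x ∈ F, IsLyndon x) → F.Pairwise NI →
    L.get ⟨i, hi⟩ = a :: w' →
    F.flatten = w' →
    (∀ f ∈ F, (a :: w') < f) →
    (∀ h0 : 0 < L.length, ∃ t0, L.get ⟨0, h0⟩ = a :: t0) →
    a :: (sortL (L.eraseIdx i ++ F)).flatten ≤ L.flatten := by
  intro i L F a w' hi hLl hLs hFl hFs hget hflat hFgt hhead
  cases i with
  | zero =>
    obtain ⟨l0, L2, rfl⟩ : ∃ l0 L2, L = l0 :: L2 := by
      rcases L with _ | ⟨l0, L2⟩
      · simp at hi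
      · exact ⟨l0, L2, rfl⟩
    have hl0 : l0 = a :: w' := by simpa using hget
    subst hl0
    have hcross : ∀ f ∈ F, ∀ x ∈ L2, NI f x := by
      intro f hf x hx
      exact le_trans ((List.pairwise_cons.1 hLs).1 x hx) (le_of_lt (hFgt f hf))
    have hsorted : (F ++ L2).Pairwise NI := by
      rw [List.pairwise_append]
      exact ⟨hFs, (List.pairwise_cons.1 hLs).2, hcross⟩
    have hperm : List.Perm (F ++ L2) (((a :: w') :: L2).eraseIdx 0 ++ F) := by
      rw [List.eraseIdx_cons_zero]
      exact List.perm_append_comm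
    rw [sortL_eq_of_sorted hsorted hperm, List.flatten_append, hflat, List.flatten_cons]
    exact le_of_eq rfl
  | succ i =>
    obtain ⟨l1, L2, rfl⟩ : ∃ l1 L2, L = l1 :: L2 := by
      rcases L with _ | ⟨l1, L2⟩
      · simp at hi
      · exact ⟨l1, L2, rfl⟩
    have hi2 : i < L2.length := by simpa using hi
    have hget2 : L2.get ⟨i, hi2⟩ = a :: w' := by simpa using hget
    obtain ⟨l1'', hl1e⟩ := hhead (by simp)
    have hl1 : l1 = a :: l1'' := by simpa using hl1e
    subst hl1
    have hl1lyn : IsLyndon (a :: l1'') := hLl _ (by simp)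
    have hLs2 : L2.Pairwise NI := (List.pairwise_cons.1 hLs).2
    have hliL2 : (a :: w') ∈ L2 := by
      rw [← hget2]; exact List.get_mem _ _
    have hlile : (a :: w') ≤ (a :: l1'') := (List.pairwise_cons.1 hLs).1 _ hliL2
    have hwle : w' ≤ l1'' := cons_le_cons_iff.1 hlile
    have hL2pos : 0 < L2.length := Nat.lt_of_le_of_lt (Nat.zero_le _) hi2
    obtain ⟨Fp, Fm, hFsplit, hFp, hFm⟩ := splitF (l1 := a :: l1'') F hFs
    have hFs' := hFs
    rw [hFsplit, List.pairwise_append] at hFs'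
    obtain ⟨hFps, hFms, _⟩ := hFs'
    have hK2s : (L2.eraseIdx i).Pairwise NI :=
      List.Pairwise.sublist (List.eraseIdx_sublist L2 i) hLs2
    have hK2le : ∀ x ∈ L2.eraseIdx i, x ≤ (a :: l1'') := fun x hx =>
      (List.pairwise_cons.1 hLs).1 x ((List.eraseIdx_sublist L2 i).mem hx)
    have hMle : ∀ x ∈ sortL (L2.eraseIdx i ++ Fm), x ≤ (a :: l1'') := by
      intro x hx
      rcases List.mem_append.1 (mem_sortL.1 hx) with hx | hx
      · exact hK2le x hx
      · exact hFm x hx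
    have hperm1 : List.Perm (Fp ++ sortL (L2.eraseIdx i ++ Fm)) (L2.eraseIdx i ++ F) := by
      refine List.Perm.trans (List.Perm.append_left Fp (sortL_perm _)) ?_
      refine List.Perm.trans (List.perm_append_comm) ?_
      rw [List.append_assoc, hFsplit]
      exact List.Perm.append_left _ List.perm_append_comm
    have hclaim2 : sortL (((a :: l1'') :: L2).eraseIdx (i + 1) ++ F)
        = Fp ++ (a :: l1'') :: sortL (L2.eraseIdx i ++ Fm) := by
      rw [List.eraseIdx_cons_succ]
      refine sortL_eq_of_sorted ?_ ?_
      · rw [List.pairwise_append]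
        refine ⟨hFps, ?_, ?_⟩
        · exact List.pairwise_cons.2 ⟨hMle, sortL_sorted _⟩
        · intro f hf x hx
          rcases List.mem_cons.1 hx with rfl | hx
          · exact le_of_lt (hFp f hf)
          · exact le_trans (hMle x hx) (le_of_lt (hFp f hf))
      · refine List.Perm.trans List.perm_middle ?_
        exact hperm1.cons _
    rw [hclaim2]
    have hgoal2 : ((a :: l1'') :: L2).flatten = a :: (l1'' ++ L2.flatten) := by
      rw [List.flatten_cons]; rfl
    have hflatgoal : (Fp ++ (a :: l1'') :: sortL (L2.eraseIdx i ++ Fm)).flatten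
        = Fp.flatten ++ ((a :: l1'') ++ (sortL (L2.eraseIdx i ++ Fm)).flatten) := by
      rw [List.flatten_append, List.flatten_cons]
    rw [hgoal2, hflatgoal]
    refine cons_le_cons_iff.2 ?_
    -- apply the loop lemma
    refine loop_lemma (a :: l1'') (sortL (L2.eraseIdx i ++ Fm)).flatten L2.flatten
      Fm.flatten hl1lyn l1''.length l1'' Fp (le_refl _) ?_ ?_ ?_ ?_
    · intro f hf
      exact (hFl f (by rw [hFsplit]; exact List.mem_append_left _ hf)).1
    · exact List.suffix_refl _
    · have : Fp.flatten ++ Fm.flatten = w' := by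
        rw [← List.flatten_append, ← hFsplit, hflat]
      rw [this]
      exact hwle
    · -- the equality ending
      intro hPz hW
      have hFmnil : Fm = [] := by
        refine List.eq_nil_iff_forall_not_mem.2 fun x hx => ?_
        have hxnil : x = [] := List.flatten_eq_nil_iff.1 hW x hx
        exact (hFl x (by rw [hFsplit]; exact List.mem_append_right _ hx)).1 hxnil
      have hw'e : w' = l1'' := by
        rw [← hflat, hFsplit, List.flatten_append, hPz, hFmnil]
        simp
      -- the i-th element of L2 equals a :: l1''
      have hgeteq : L2.get ⟨i, hi2⟩ = (a :: l1'') := by rw [hget2, hw'e]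
      obtain ⟨y, T, rfl⟩ : ∃ y T, L2 = y :: T := by
        rcases L2 with _ | ⟨y, T⟩
        · simp at hL2pos
        · exact ⟨y, T, rfl⟩
      have hy : y = (a :: l1'') := by
        have h1 : (a :: w') ≤ y := by
          rw [← hget2]
          exact sorted_get_le_zero hLs2 hi2 hL2pos
        have h2 : y ≤ (a :: l1'') := (List.pairwise_cons.1 hLs).1 _ (by simp)
        rw [hw'e] at h1
        exact le_antisymm h2 h1
      subst hy
      have hpermT : List.Perm ((a :: l1'') :: T) ((a :: l1'') :: (( (a :: l1'') :: T).eraseIdx i)) := by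
        have := perm_get_eraseIdx ((a :: l1'') :: T) i hi2
        rwa [hgeteq] at this
      have hTK : ((a :: l1'') :: T).eraseIdx i = T := by
        refine List.Perm.eq_of_pairwise' hK2s ?_ (List.Perm.cons_inv hpermT).symm
        exact (List.pairwise_cons.1 hLs2).2
      have hMK : sortL (((a :: l1'') :: T).eraseIdx i ++ Fm) = T := by
        rw [hFmnil, List.append_nil, hTK]
        exact sortL_eq_of_sorted (List.pairwise_cons.1 hLs2).2 (List.Perm.refl _)
      rw [hMK]
      rw [List.flatten_cons]

/-! ### the main bound: every shuffle of a nonincreasing list of Lyndon words is at most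
the concatenation -/

theorem flatten_length_perm {K K' : List (List X)} (h : List.Perm K K') :
    K.flatten.length = K'.flatten.length := by
  rw [List.length_flatten, List.length_flatten]
  exact List.Perm.sum_eq (h.map _)

theorem rad_aux : ∀ (n : ℕ) (L : List (List X)), L.flatten.length ≤ n →
    (∀ x ∈ L, IsLyndon x) → L.Pairwise NI → ∀ {s : List X}, s ∈ shL L → s ≤ L.flatten := by
  intro n
  induction n with
  | zero =>
    intro L hlen hLl _ s hs
    have hLnil : L = [] := by
      rcases L with _ | ⟨x, L⟩
      · rfl
      · exfalso
        have hfl : ((x :: L).flatten) = [] :=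
          List.length_eq_zero_iff.1 (Nat.le_zero.1 hlen)
        exact (hLl x (by simp)).1 (List.flatten_eq_nil_iff.1 hfl x (by simp))
    subst hLnil
    simp at hs
    subst hs
    simp
  | succ n ih =>
    intro L hlen hLl hLs s hs
    rcases eq_or_ne L [] with rfl | hLne
    · simp at hs
      subst hs
      simp
    · obtain ⟨i, hi, aa, w', s', hget, rfl, hmem⟩ :=
        peel_shL L (fun x hx => (hLl x hx).1) hLne hs
      obtain ⟨l0, Ltl, rfl⟩ : ∃ l0 Ltl, L = l0 :: Ltl := by
        rcases L with _ | ⟨l0, Ltl⟩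
        · exact absurd rfl hLne
        · exact ⟨l0, Ltl, rfl⟩
      obtain ⟨h0, t0, rfl⟩ : ∃ h0 t0, l0 = h0 :: t0 := by
        rcases l0 with _ | ⟨h0, t0⟩
        · exact absurd rfl (hLl [] (by simp)).1
        · exact ⟨h0, t0, rfl⟩
      have hle0 : (aa :: w') ≤ (h0 :: t0) := by
        rw [← hget]
        exact sorted_get_le_zero hLs hi (by simp)
      have haa : aa ≤ h0 := head_le_of_le hle0
      rcases lt_or_eq_of_le haa with hlt | heq
      · refine le_of_lt ?_
        rw [List.flatten_cons, List.cons_append]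
        exact List.Lex.rel hlt
      · obtain ⟨F, hFl, hFs, hFflat⟩ := cfl_exists w'
        have hilyn : IsLyndon (aa :: w') := by
          rw [← hget]; exact hLl _ (List.get_mem _ _)
        have hFgt : ∀ f ∈ F, (aa :: w') < f := by
          intro f hf
          have hFne : F ≠ [] := List.ne_nil_of_mem hf
          have h1 : F.getLast hFne ≤ f := sorted_getLast_le hFs hFne f hf
          have h2 : F.getLast hFne <:+ w' := by
            rw [← hFflat]; exact getLast_suffix_flatten F hFne
          have h3 : F.getLast hFne ≠ [] := (hFl _ (List.getLast_mem hFne)).1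
          obtain ⟨p, hp⟩ := h2
          have h4 : (aa :: w') < F.getLast hFne :=
            hilyn.2 (aa :: p) (F.getLast hFne) (by simp) h3 (by rw [List.cons_append, hp])
          exact lt_of_lt_of_le h4 h1
        have hmem1 : s' ∈ shL (w' :: (((h0 :: t0) :: Ltl).eraseIdx i)) :=
          shL_perm_mem (perm_set_eraseIdx ((h0 :: t0) :: Ltl) i hi w') hmem
        obtain ⟨kk, hkk, hsk⟩ := mem_shL_cons.1 hmem1
        have hw'mem : w' ∈ shL F := by rw [← hFflat]; exact flatten_mem_shL F
        have hmem2 : s' ∈ shL (F ++ ((h0 :: t0) :: Ltl).eraseIdx i) :=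
          nest_shL F (((h0 :: t0) :: Ltl).eraseIdx i) w' kk s' hw'mem hkk hsk
        have hmem3 : s' ∈ shL (sortL (((h0 :: t0) :: Ltl).eraseIdx i ++ F)) := by
          refine shL_perm_mem ?_ hmem2
          exact (List.perm_append_comm).trans (sortL_perm _).symm
        have hNlyn : ∀ x ∈ sortL (((h0 :: t0) :: Ltl).eraseIdx i ++ F), IsLyndon x := by
          intro x hx
          rcases List.mem_append.1 (mem_sortL.1 hx) with hx | hx
          · exact hLl x ((List.eraseIdx_sublist ((h0 :: t0) :: Ltl) i).mem hx)
          · exact hFl x hx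
        have hNlen : (sortL (((h0 :: t0) :: Ltl).eraseIdx i ++ F)).flatten.length ≤ n := by
          have e1 : (sortL (((h0 :: t0) :: Ltl).eraseIdx i ++ F)).flatten.length
              = (((h0 :: t0) :: Ltl).eraseIdx i ++ F).flatten.length :=
            flatten_length_perm (sortL_perm _)
          have e2 : ((h0 :: t0) :: Ltl).flatten.length
              = ((aa :: w') :: ((h0 :: t0) :: Ltl).eraseIdx i).flatten.length :=
            flatten_length_perm (by rw [← hget]; exact perm_get_eraseIdx _ i hi)
          rw [List.flatten_append, List.length_append, hFflat] at e1
          simp only [List.flatten_cons, List.length_append, List.length_cons] at e2 hlen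
          omega
        have hIH := ih (sortL (((h0 :: t0) :: Ltl).eraseIdx i ++ F)) hNlen hNlyn
          (sortL_sorted _) hmem3
        have hWI := word_ineq i ((h0 :: t0) :: Ltl) F aa w' hi hLl hLs hFl hFs hget hFflat hFgt
          (fun _ => ⟨t0, by simp [heq]⟩)
        exact le_trans (cons_le_cons_iff.2 hIH) hWI

theorem rad {L : List (List X)} (hLl : ∀ x ∈ L, IsLyndon x) (hLs : L.Pairwise NI)
    {s : List X} (hs : s ∈ shL L) : s ≤ L.flatten :=
  rad_aux L.flatten.length L (le_refl _) hLl hLs hs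

/-! ### locality -/

theorem mem_shuffles_pairwise_aux {t : X → X → Prop} :
    ∀ (n : ℕ) (u v s : List X), u.length + v.length ≤ n → s ∈ shuffles u v →
    u.Pairwise t → v.Pairwise t →
    (∀ a ∈ u, ∀ b ∈ v, t a b) → (∀ b ∈ v, ∀ a ∈ u, t b a) →
    s.Pairwise t := by
  intro n
  induction n with
  | zero =>
    intro u v s hlen hs _ _ _ _
    have hu : u = [] := by cases u <;> simp_all
    have hv : v = [] := by cases v <;> simp_all
    subst hu; subst hv
    simp at hs; simp [hs]
  | succ n ih =>
    intro u v s hlen hs hu hv hc1 hc2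
    match u, v with
    | [], v =>
      rw [shuffles_nil_left, Multiset.mem_singleton] at hs
      subst hs; exact hv
    | a :: u, [] =>
      rw [shuffles_nil_right, Multiset.mem_singleton] at hs
      subst hs; exact hu
    | a :: u, b :: v =>
      rcases mem_shuffles_cons_cons.1 hs with ⟨s', h1, rfl⟩ | ⟨s', h1, rfl⟩
      · refine List.pairwise_cons.2 ⟨?_, ?_⟩
        · intro c hc
          have hc' : c ∈ u ++ (b :: v) := (mem_shuffles_perm h1).mem_iff.1 hc
          rcases List.mem_append.1 hc' with hc' | hc'
          · exact (List.pairwise_cons.1 hu).1 c hc'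
          · exact hc1 a (by simp) c hc'
        · exact ih u (b :: v) s' (by simp at hlen ⊢; omega) h1 (List.pairwise_cons.1 hu).2 hv
            (fun x hx y hy => hc1 x (by simp [hx]) y hy)
            (fun x hx y hy => hc2 x hx y (by simp [hy]))
      · refine List.pairwise_cons.2 ⟨?_, ?_⟩
        · intro c hc
          have hc' : c ∈ (a :: u) ++ v := (mem_shuffles_perm h1).mem_iff.1 hc
          rcases List.mem_append.1 hc' with hc' | hc'
          · exact hc2 b (by simp) c hc'
          · exact (List.pairwise_cons.1 hv).1 c hc'
        · exact ih (a :: u) v s' (by simp at hlen ⊢; omega) h1 hu (List.pairwise_cons.1 hv).2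
            (fun x hx y hy => hc1 x hx y (by simp [hy]))
            (fun x hx y hy => hc2 x (by simp [hx]) y hy)

theorem mem_shL_pairwise {t : X → X → Prop} (hsymm : ∀ a b, t a b → t b a) :
    ∀ (L : List (List X)), (∀ x ∈ L, x.Pairwise t) → L.Pairwise (WordRel t) →
    ∀ {s : List X}, s ∈ shL L → s.Pairwise t := by
  intro L
  induction L with
  | nil =>
    intro _ _ s hs
    simp at hs; simp [hs]
  | cons w L ih =>
    intro hx hpw s hs
    obtain ⟨m, hm, hsm⟩ := mem_shL_cons.1 hs
    have hmp : m.Pairwise t := ih (fun x h => hx x (by simp [h])) (List.pairwise_cons.1 hpw).2 hm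
    refine mem_shuffles_pairwise_aux (w.length + m.length) w m s (le_refl _) hsm
      (hx w (by simp)) hmp ?_ ?_
    · intro a ha b hb
      have hb' : b ∈ L.flatten := (mem_shL_perm hm).mem_iff.1 hb
      obtain ⟨x, hxL, hbx⟩ := List.mem_flatten.1 hb'
      exact (List.pairwise_cons.1 hpw).1 x hxL a ha b hbx
    · intro b hb a ha
      have hb' : b ∈ L.flatten := (mem_shL_perm hm).mem_iff.1 hb
      obtain ⟨x, hxL, hbx⟩ := List.mem_flatten.1 hb'
      exact hsymm _ _ ((List.pairwise_cons.1 hpw).1 x hxL a ha b hbx)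

/-! ### well-foundedness of same-length lexicographic order -/

def lexlen : List X → List X → Prop := fun u v => u.length = v.length ∧ u < v

theorem lexlen_acc_aux [WellFoundedLT X] :
    ∀ (n : ℕ) (w : List X), w.length = n → Acc (lexlen (X := X)) w := by
  intro n
  induction n with
  | zero =>
    intro w hw
    have : w = [] := List.length_eq_zero_iff.1 hw
    subst this
    constructor
    rintro u ⟨hul, hulex⟩
    exact absurd hulex (List.not_lt_nil _)
  | succ n ihn =>
    intro w hw
    obtain ⟨a, w', rfl⟩ : ∃ a w', w = a :: w' := by
      rcases w with _ | ⟨a, w'⟩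
      · simp at hw
      · exact ⟨a, w', rfl⟩
    have hw' : w'.length = n := by simpa using hw
    have main : ∀ a : X, ∀ w' : List X, w'.length = n → Acc (lexlen (X := X)) (a :: w') := by
      intro a
      refine (IsWellFounded.wf (r := ((· < ·) : X → X → Prop))).induction
        (C := fun a => ∀ w' : List X, w'.length = n → Acc (lexlen (X := X)) (a :: w')) a ?_
      intro a iha w' hw'
      have inner : ∀ w'' : List X, Acc (lexlen (X := X)) w'' → w''.length = n →
          Acc (lexlen (X := X)) (a :: w'') := by
        intro w'' hacc
        induction hacc with
        | intro y hW ihW =>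
          intro hy
          constructor
          rintro u ⟨hul, hulex⟩
          obtain ⟨b, u', rfl⟩ : ∃ b u', u = b :: u' := by
            rcases u with _ | ⟨b, u'⟩
            · simp at hul
            · exact ⟨b, u', rfl⟩
          have hu'len : u'.length = n := by simp at hul; omega
          cases hulex with
          | rel h => exact iha b h u' hu'len
          | cons h =>
            exact ihW u' ⟨by simp [hu'len, hy], h⟩ hu'len
      exact inner w' (ihn w' hw') hw'
    exact main a w' hw'

theorem lexlen_acc [WellFoundedLT X] (w : List X) : Acc (lexlen (X := X)) w :=
  lexlen_acc_aux w.length w rfl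

/-! ### algebra bridge -/

section Algebra

variable (k : Type*) [CommRing k]

theorem shMul_single_left (w : List X) (g : List X →₀ k) :
    shMul k (Finsupp.single w 1) g
      = g.sum fun v d => ((shuffles w v).map fun u => Finsupp.single u d).sum := by
  unfold shMul
  rw [Finsupp.sum_single_index]
  · simp only [one_mul]
  · simp only [zero_mul, Finsupp.single_zero]
    simp

theorem shMul_single_single (w v : List X) (d : k) :
    shMul k (Finsupp.single w 1) (Finsupp.single v d)
      = ((shuffles w v).map fun u => Finsupp.single u d).sum := by
  rw [shMul_single_left]
  rw [Finsupp.sum_single_index]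
  simp

theorem shMul_single_add (w : List X) (g1 g2 : List X →₀ k) :
    shMul k (Finsupp.single w 1) (g1 + g2)
      = shMul k (Finsupp.single w 1) g1 + shMul k (Finsupp.single w 1) g2 := by
  rw [shMul_single_left, shMul_single_left, shMul_single_left]
  refine Finsupp.sum_add_index' ?_ ?_
  · intro a; simp
  · intro a b1 b2
    rw [show ((shuffles w a).map fun u => Finsupp.single u (b1 + b2))
        = ((shuffles w a).map fun u => Finsupp.single u b1 + Finsupp.single u b2) from
      Multiset.map_congr rfl (fun x _ => Finsupp.single_add x b1 b2)]
    rw [Multiset.sum_map_add]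

theorem shMul_single_zero' (w : List X) :
    shMul k (Finsupp.single w 1) (0 : List X →₀ k) = 0 := by
  rw [shMul_single_left]
  simp

theorem shMul_single_msum (w : List X) (M : Multiset (List X)) :
    shMul k (Finsupp.single w 1) ((M.map fun m => Finsupp.single m (1 : k)).sum)
      = ((M.bind (shuffles w)).map fun u => Finsupp.single u (1 : k)).sum := by
  induction M using Multiset.induction with
  | empty => simp [shMul_single_zero']
  | cons m M ih =>
    rw [Multiset.map_cons, Multiset.sum_cons, shMul_single_add, ih, shMul_single_single,
      Multiset.cons_bind, Multiset.map_add, Multiset.sum_add]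

theorem shProd_eq (L : List (List X)) :
    shProd k L = ((shL L).map fun u => Finsupp.single u (1 : k)).sum := by
  induction L with
  | nil =>
    show Finsupp.single [] 1 = _
    simp [shL_nil]
  | cons w L ih =>
    show shMul k (Finsupp.single w 1) (shProd k L) = _
    rw [ih, shMul_single_msum, shL_cons]

theorem msum_single_apply (M : Multiset (List X)) (w0 : List X) :
    (((M.map fun u => Finsupp.single u (1 : k)).sum) w0) = (M.count w0 : k) := by
  induction M using Multiset.induction with
  | empty => simp
  | cons m M ih =>
    rw [Multiset.map_cons, Multiset.sum_cons, Finsupp.add_apply, ih, Multiset.count_cons]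
    rcases eq_or_ne m w0 with rfl | h
    · simp [add_comm]
    · simp [Finsupp.single_apply, h, Ne.symm h]

theorem shProd_split (L : List (List X)) (w0 : List X) :
    shProd k L = (Multiset.count w0 (shL L) : k) • Finsupp.single w0 (1 : k)
      + ((((shL L).filter (fun u => ¬ u = w0)).map fun u => Finsupp.single u (1 : k))).sum := by
  rw [shProd_eq]
  conv_lhs => rw [← Multiset.filter_add_not (fun u => u = w0) (shL L)]
  rw [Multiset.map_add, Multiset.sum_add, Multiset.filter_eq', Multiset.map_replicate,
    Multiset.sum_replicate, ← Nat.cast_smul_eq_nsmul k]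

end Algebra

/-! ### helpers for the main theorem -/

theorem cond_sorted_iff {l : List (List X)} :
    l.Pairwise (fun a b => a = b ∨ wlt b a) ↔ l.Pairwise NI := by
  constructor
  · refine fun h => h.imp ?_
    rintro a b (rfl | hab)
    · exact le_refl _
    · exact le_of_lt hab
  · refine fun h => h.imp ?_
    intro a b hab
    rcases lt_or_eq_of_le hab with h' | h'
    · exact Or.inr h'
    · exact Or.inl h'.symm

theorem msum_single_mem {k : Type*} [CommRing k] {S : Submodule k (List X →₀ k)}
    (M : Multiset (List X)) (h : ∀ u ∈ M, Finsupp.single u (1 : k) ∈ S) :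
    ((M.map fun u => Finsupp.single u (1 : k)).sum) ∈ S := by
  induction M using Multiset.induction with
  | empty => simp
  | cons m M ih =>
    rw [Multiset.map_cons, Multiset.sum_cons]
    exact Submodule.add_mem _ (h m (by simp)) (ih fun u hu => h u (by simp [hu]))

theorem nat_smul_cancel {k : Type*} [CommRing k] [Algebra ℚ k] {m : ℕ} (hm : m ≠ 0)
    {V : Type*} [AddCommGroup V] [Module k V] (x : V) :
    (algebraMap ℚ k (1 / (m : ℚ))) • ((m : k) • x) = x := by
  rw [smul_smul, show ((m : ℕ) : k) = algebraMap ℚ k ((m : ℕ) : ℚ) from (map_natCast _ m).symm,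
    ← map_mul, one_div_mul_cancel (Nat.cast_ne_zero.2 hm), map_one, one_smul]

theorem mul_nat_eq_zero_cancel {k : Type*} [CommRing k] [Algebra ℚ k] {m : ℕ} (hm : m ≠ 0)
    {c : k} (h : c * (m : k) = 0) : c = 0 := by
  have h2 : c * (m : k) * (algebraMap ℚ k (1 / (m : ℚ))) = 0 := by rw [h, zero_mul]
  rw [mul_assoc, show ((m : ℕ) : k) = algebraMap ℚ k ((m : ℕ) : ℚ) from (map_natCast _ m).symm,
    ← map_mul] at h2
  rw [mul_one_div_cancel (Nat.cast_ne_zero.2 hm), map_one, mul_one] at h2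
  exact h2

end SP

open SP

/-- Locality Radford theorem, Theorem `thm:lynloc` (ii).
Let `(X, ≤)` be a well-ordered set with a locality relation `⊤` and `k` a `ℚ`-algebra.
The locality Lyndon words form a locality algebraically independent generating set of the
locality shuffle algebra `Sh_⊤(kX)`: the distinct locality monomials built from locality
Lyndon words (indexed by lexicographically nonincreasing lists of pairwise `⊤`-related
locality Lyndon words) are linearly independent, and they span `Sh_⊤(kX) = k W_⊤(X)`. -/
theorem statement14 {X : Type*} [LinearOrder X] [WellFoundedLT X]
    (t : X → X → Prop) (hsymm : ∀ a b, t a b → t b a)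
    [Algebra ℚ k] :
    LinearIndependent k
      (fun l : {l : List (List X) //
          (∀ u ∈ l, IsLyndon u ∧ LocWord t u) ∧
          l.Pairwise (fun a b => a = b ∨ wlt b a) ∧
          l.Pairwise (WordRel t)} =>
        shProd k l.1) ∧
    Submodule.span k
      (Set.range (fun l : {l : List (List X) //
          (∀ u ∈ l, IsLyndon u ∧ LocWord t u) ∧
          l.Pairwise (fun a b => a = b ∨ wlt b a) ∧
          l.Pairwise (WordRel t)} =>
        shProd k l.1)) =
    Submodule.span k
      {f : List X →₀ k | ∃ w : List X, LocWord t w ∧ f = Finsupp.single w 1} := by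
  classical
  constructor
  · -- linear independence
    rw [linearIndependent_iff]
    intro c hc
    by_contra hc0
    have hsupp : c.support.Nonempty := Finsupp.support_nonempty_iff.2 hc0
    obtain ⟨L0, hL0mem, hL0max⟩ := Finset.exists_max_image c.support (fun l => l.1.flatten) hsupp
    have heval : (Finsupp.linearCombination k
        (fun l : {l : List (List X) //
          (∀ u ∈ l, IsLyndon u ∧ LocWord t u) ∧
          l.Pairwise (fun a b => a = b ∨ wlt b a) ∧
          l.Pairwise (WordRel t)} => shProd k l.1) c) L0.1.flatten = 0 := by
      rw [hc]; rfl
    rw [Finsupp.linearCombination_apply, Finsupp.sum_apply] at heval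
    rw [Finsupp.sum_eq_single L0 ?h1 ?h2] at heval
    case h1 =>
      intro L hcL hne
      have hz : Multiset.count L0.1.flatten (shL L.1) = 0 := by
        rw [Multiset.count_eq_zero]
        intro hmem
        have h1 : L0.1.flatten ≤ L.1.flatten :=
          rad (fun x hx => (L.2.1 x hx).1) (cond_sorted_iff.1 L.2.2.1) hmem
        have h2 : L.1.flatten ≤ L0.1.flatten := hL0max L (Finsupp.mem_support_iff.2 hcL)
        have h3 : L.1.flatten = L0.1.flatten := le_antisymm h2 h1
        have h4 : L.1 = L0.1 := cfl_unique (fun x hx => (L.2.1 x hx).1)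
          (cond_sorted_iff.1 L.2.2.1) (fun x hx => (L0.2.1 x hx).1)
          (cond_sorted_iff.1 L0.2.2.1) h3
        exact hne (Subtype.ext h4)
      rw [Finsupp.smul_apply, smul_eq_mul, shProd_eq, msum_single_apply, hz]
      simp
    case h2 =>
      intro _
      simp
    rw [Finsupp.smul_apply, smul_eq_mul, shProd_eq, msum_single_apply] at heval
    have hwmem : L0.1.flatten ∈ shL L0.1 := flatten_mem_shL _
    have hmpos : Multiset.count L0.1.flatten (shL L0.1) ≠ 0 := by
      have := Multiset.count_pos.2 hwmem
      omega
    exact (Finsupp.mem_support_iff.1 hL0mem) (mul_nat_eq_zero_cancel hmpos heval)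
  · -- spans agree
    apply le_antisymm
    · rw [Submodule.span_le]
      rintro f ⟨L, rfl⟩
      rw [SetLike.mem_coe]
      show shProd k L.1 ∈ _
      rw [shProd_eq]
      refine msum_single_mem _ fun u hu => Submodule.subset_span ?_
      refine ⟨u, ?_, rfl⟩
      exact mem_shL_pairwise hsymm L.1 (fun x hx => (L.2.1 x hx).2) L.2.2.2 hu
    · rw [Submodule.span_le]
      rintro f ⟨w, hwloc, rfl⟩
      rw [SetLike.mem_coe]
      -- well-founded induction on (length, lex)
      have main : ∀ w : List X, Acc (lexlen (X := X)) w → LocWord t w →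
          Finsupp.single w (1 : k) ∈ Submodule.span k
            (Set.range (fun l : {l : List (List X) //
              (∀ u ∈ l, IsLyndon u ∧ LocWord t u) ∧
              l.Pairwise (fun a b => a = b ∨ wlt b a) ∧
              l.Pairwise (WordRel t)} => shProd k l.1)) := by
        intro w0 hacc
        induction hacc with
        | intro w hW ihW =>
          intro hloc
          obtain ⟨Lw, hLl, hLs, hLflat⟩ := cfl_exists w
          have hfac : ∀ u ∈ Lw, IsLyndon u ∧ LocWord t u := fun u hu =>
            ⟨hLl u hu, List.Pairwise.sublist (hLflat ▸ List.sublist_flatten_of_mem hu) hloc⟩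
          have hpair : Lw.Pairwise (WordRel t) := by
            have hflp : (Lw.flatten).Pairwise t := by rw [hLflat]; exact hloc
            exact (List.pairwise_flatten.1 hflp).2
          have hwmem : w ∈ shL Lw := by
            rw [← hLflat]
            exact flatten_mem_shL _
          have hmne : Multiset.count w (shL Lw) ≠ 0 := by
            have := Multiset.count_pos.2 hwmem
            omega
          have hrest : (((shL Lw).filter (fun u => ¬ u = w)).map
              fun u => Finsupp.single u (1 : k)).sum ∈ Submodule.span k
                (Set.range (fun l : {l : List (List X) //
                  (∀ u ∈ l, IsLyndon u ∧ LocWord t u) ∧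
                  l.Pairwise (fun a b => a = b ∨ wlt b a) ∧
                  l.Pairwise (WordRel t)} => shProd k l.1)) := by
            refine msum_single_mem _ fun u hu => ?_
            have hu1 : u ∈ shL Lw := (Multiset.mem_filter.1 hu).1
            have hune : ¬ u = w := (Multiset.mem_filter.1 hu).2
            have hlen : u.length = w.length := by
              rw [mem_shL_length hu1, hLflat]
            have hlt : u < w := by
              have := rad hLl hLs hu1
              rw [hLflat] at this
              exact lt_of_le_of_ne this hune
            exact ihW u ⟨hlen, hlt⟩
              (mem_shL_pairwise hsymm Lw (fun x hx => (hfac x hx).2) hpair hu1)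
          have hsplit := shProd_split k Lw w
          have hsm : (Multiset.count w (shL Lw) : k) • Finsupp.single w (1 : k)
              = shProd k Lw - (((shL Lw).filter (fun u => ¬ u = w)).map
                fun u => Finsupp.single u (1 : k)).sum := by
            rw [hsplit]; abel
          have hmem2 : (Multiset.count w (shL Lw) : k) • Finsupp.single w (1 : k)
              ∈ Submodule.span k
                (Set.range (fun l : {l : List (List X) //
                  (∀ u ∈ l, IsLyndon u ∧ LocWord t u) ∧
                  l.Pairwise (fun a b => a = b ∨ wlt b a) ∧
                  l.Pairwise (WordRel t)} => shProd k l.1)) := by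
            rw [hsm]
            refine Submodule.sub_mem _ (Submodule.subset_span ?_) hrest
            exact ⟨⟨Lw, hfac, cond_sorted_iff.2 hLs, hpair⟩, rfl⟩
          have := Submodule.smul_mem _ (algebraMap ℚ k (1 / ((Multiset.count w (shL Lw) : ℕ) : ℚ))) hmem2
          rwa [nat_smul_cancel hmne] at this
      exact main w (lexlen_acc w) hwloc
end
end
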